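/- For every c ∈ (0, 1/2] there exists a constant C > 0 such that the following holds. Let n ≥ 2 and 0 < p < n be integers, let α be a real with c ≤ α ≤ 1 − c such that αn and αp are integers, and let Φ ⊆ {1,…,n} with |Φ| = p. Suppose F assigns a real number to every αn-element subset S' of {1,…,n}, and w ∈ ℝⁿ is such that the average over all αn-element subsets S' of (F(S') − Σ_{i∈S'} w_i)² is at most ε for some ε ≥ 0. Then |avg{F(S') : |S'| = αn, |S' ∩ Φ| = αp} − avg{Σ_{i∈S'} w_i : |S'| = αn, |S' ∩ Φ| = αp}| ≤ C · ε^{1/2} · n^{1/4}. -/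

import Mathlib

open Finset


/-- The average of `F` over the `m`-element subsets of `{1,…,n}` satisfying `P`
(the conditional expectation of `F` under the uniform distribution on `m`-element
subsets, conditioned on `P`). -/
noncomputable def condAvg {n : ℕ} (m : ℕ) (P : Finset (Fin n) → Prop) [DecidablePred P]
    (F : Finset (Fin n) → ℝ) : ℝ :=
  (∑ S' ∈ (Finset.powersetCard m (Finset.univ : Finset (Fin n))).filter P, F S')
    / (((Finset.powersetCard m (Finset.univ : Finset (Fin n))).filter P).card : ℝ)

set_option maxHeartbeats 4000000

lemma count_inter {n : ℕ} (Φ : Finset (Fin n)) (m k : ℕ) (hk : k ≤ m) :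
    (((Finset.powersetCard m (Finset.univ : Finset (Fin n))).filter
      (fun S' => (S' ∩ Φ).card = k)).card : ℕ)
    = Φ.card.choose k * Φᶜ.card.choose (m - k) := by
  rw [← Finset.card_powersetCard, ← Finset.card_powersetCard, ← Finset.card_product]
  apply Finset.card_bij' (fun S' _ => (S' ∩ Φ, S' \ Φ)) (fun X _ => X.1 ∪ X.2)
  · intro S' hS'
    simp only [Finset.mem_filter, Finset.mem_powersetCard_univ] at hS'
    simp only [Finset.mem_product, Finset.mem_powersetCard]
    refine ⟨⟨Finset.inter_subset_right, hS'.2⟩, ⟨?_, ?_⟩⟩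
    · intro x hx
      simp only [Finset.mem_sdiff] at hx
      simp [hx.2]
    · have h1 := Finset.card_sdiff_add_card_inter S' Φ
      rw [hS'.1, hS'.2] at h1
      omega
  · intro X hX
    simp only [Finset.mem_product, Finset.mem_powersetCard] at hX
    obtain ⟨⟨hX1, hX1c⟩, hX2, hX2c⟩ := hX
    have hdisj : Disjoint X.1 X.2 := by
      refine Finset.disjoint_left.mpr fun a ha ha2 => ?_
      have := hX2 ha2
      simp only [Finset.mem_compl] at this
      exact this (hX1 ha)
    simp only [Finset.mem_filter, Finset.mem_powersetCard_univ]
    constructor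
    · rw [Finset.card_union_of_disjoint hdisj, hX1c, hX2c]; omega
    · have : (X.1 ∪ X.2) ∩ Φ = X.1 := by
        rw [Finset.union_inter_distrib_right, Finset.inter_eq_left.mpr hX1]
        have h0 : X.2 ∩ Φ = ∅ := by
          refine Finset.eq_empty_of_forall_notMem fun a ha => ?_
          simp only [Finset.mem_inter] at ha
          have := hX2 ha.1
          simp only [Finset.mem_compl] at this
          exact this ha.2
        rw [h0, Finset.union_empty]
      rw [this, hX1c]
  · intro S' hS'
    simp only
    rw [Finset.union_comm]
    exact Finset.sdiff_union_inter S' Φ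
  · intro X hX
    simp only [Finset.mem_product, Finset.mem_powersetCard] at hX
    obtain ⟨⟨hX1, hX1c⟩, hX2, hX2c⟩ := hX
    have h1 : (X.1 ∪ X.2) ∩ Φ = X.1 := by
      rw [Finset.union_inter_distrib_right, Finset.inter_eq_left.mpr hX1]
      have h0 : X.2 ∩ Φ = ∅ := by
        refine Finset.eq_empty_of_forall_notMem fun a ha => ?_
        simp only [Finset.mem_inter] at ha
        have := hX2 ha.1
        simp only [Finset.mem_compl] at this
        exact this ha.2
      rw [h0, Finset.union_empty]
    have h2 : (X.1 ∪ X.2) \ Φ = X.2 := by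
      ext a
      simp only [Finset.mem_sdiff, Finset.mem_union]
      constructor
      · rintro ⟨h | h, hn⟩
        · exact absurd (hX1 h) hn
        · exact h
      · intro h
        refine ⟨Or.inr h, fun hm => ?_⟩
        have := hX2 h
        simp only [Finset.mem_compl] at this
        exact this hm
    simp [h1, h2]

lemma tail_sum (g : ℕ → ℝ) (s : ℝ) (hs : 1 ≤ s) (hg : ∀ j, 0 ≤ g j)
    (hrec : ∀ j, g (j + 1) ≤ g j * (s / (s + j)) ^ 2) (M : ℕ) :
    ∑ j ∈ Finset.range M, g j ≤ 4 * (Real.sqrt s + 1) * g 0 := by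
  have hs0 : 0 < s := lt_of_lt_of_le one_pos hs
  set q : ℕ := ⌈Real.sqrt s⌉₊ with hqdef
  have hsq : 0 ≤ Real.sqrt s := Real.sqrt_nonneg s
  have hq1 : 1 ≤ q := by
    rw [hqdef]
    exact Nat.one_le_ceil_iff.mpr (by positivity)
  have hq2 : s ≤ (q : ℝ) ^ 2 := by
    have h1 : Real.sqrt s ≤ (q : ℝ) := Nat.le_ceil _
    calc s = Real.sqrt s ^ 2 := (Real.sq_sqrt hs0.le).symm
    _ ≤ (q : ℝ) ^ 2 := by nlinarith
  have hq3 : (q : ℝ) ≤ Real.sqrt s + 1 := (Nat.ceil_lt_add_one hsq).le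
  -- monotonicity
  have hmono : ∀ i j : ℕ, i ≤ j → g j ≤ g i := by
    have hstep : ∀ j, g (j + 1) ≤ g j := by
      intro j
      refine (hrec j).trans ?_
      have h1 : (s / (s + j)) ^ 2 ≤ 1 := by
        have : s / (s + j) ≤ 1 := by
          rw [div_le_one (by positivity)]
          linarith [Nat.cast_nonneg (α := ℝ) j]
        nlinarith [div_nonneg hs0.le (by positivity : (0:ℝ) ≤ s + j)]
      nlinarith [hg j]
    intro i j hij
    exact (antitone_nat_of_succ_le hstep) hij
  -- chain within a block
  have hchain : ∀ t r : ℕ, g (t * q + r) ≤ g (t * q) * (s ^ 2 / (s + t * q) ^ 2) ^ r := by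
    intro t r
    induction r with
    | zero => simp
    | succ r ih =>
      have h1 := hrec (t * q + r)
      push_cast at h1
      have h2 : (s / (s + ((t:ℝ) * q + r))) ^ 2 ≤ s ^ 2 / (s + t * q) ^ 2 := by
        rw [div_pow]
        have hX : (0:ℝ) ≤ (t:ℝ) * q := by positivity
        have hr : (0:ℝ) ≤ (r:ℝ) := Nat.cast_nonneg r
        have hle : (s + (t:ℝ) * q) ^ 2 ≤ (s + ((t:ℝ) * q + r)) ^ 2 := by
          nlinarith [mul_nonneg hr hX, mul_nonneg hr hs0.le, sq_nonneg (r:ℝ)]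
        exact div_le_div_of_nonneg_left (by positivity) (by positivity) hle
      calc g (t * q + (r + 1)) = g (t * q + r + 1) := by ring_nf
      _ ≤ g (t * q + r) * (s / (s + ((t:ℝ) * q + r))) ^ 2 := h1
      _ ≤ (g (t * q) * (s ^ 2 / (s + t * q) ^ 2) ^ r) * (s ^ 2 / (s + t * q) ^ 2) := by
          apply mul_le_mul ih h2 (by positivity)
          have h3 : (0:ℝ) ≤ (s ^ 2 / (s + (t:ℝ) * q) ^ 2) ^ r := by positivity
          nlinarith [hg (t * q)]
      _ = g (t * q) * (s ^ 2 / (s + t * q) ^ 2) ^ (r + 1) := by ring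
  -- block decay
  have hblock : ∀ t : ℕ, g ((t + 1) * q) ≤ g (t * q) * (1 / ((t:ℝ) + 1)) ^ 2 := by
    intro t
    have h1 : g ((t + 1) * q) ≤ g (t * q) * (s ^ 2 / (s + t * q) ^ 2) ^ q := by
      have := hchain t q
      have he : t * q + q = (t + 1) * q := by ring
      rwa [he] at this
    refine h1.trans (mul_le_mul_of_nonneg_left ?_ (hg (t * q)))
    have hpos1 : (0:ℝ) < 1 + t * q / s := by positivity
    have hb : (1 : ℝ) + (t : ℝ) ≤ (1 + (t:ℝ) * q / s) ^ q := by
      have hber : 1 + (q : ℝ) * ((t:ℝ) * q / s) ≤ (1 + (t:ℝ) * q / s) ^ q := by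
        apply one_add_mul_le_pow
        have : (0:ℝ) ≤ (t : ℝ) * q / s := by positivity
        linarith
      have h5 : (t : ℝ) ≤ (q : ℝ) * ((t:ℝ) * q / s) := by
        rw [mul_div_assoc']
        rw [le_div_iff₀ hs0]
        nlinarith [Nat.cast_nonneg (α := ℝ) t]
      linarith
    have he : s ^ 2 / (s + (t:ℝ) * q) ^ 2 = (1 / (1 + (t:ℝ) * q / s)) ^ 2 := by
      rw [div_pow, one_pow]
      rw [div_eq_div_iff (by positivity) (by positivity)]
      field_simp
    rw [he, ← pow_mul, mul_comm 2 q, pow_mul]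
    apply pow_le_pow_left₀ (by positivity)
    rw [div_pow, one_pow]
    exact one_div_le_one_div_of_le (by positivity) (by linarith)
  -- factorial-type decay across blocks
  have hfac : ∀ t : ℕ, g (t * q) ≤ g 0 * 2 * (1 / 2) ^ t := by
    intro t
    induction t with
    | zero => simpa using by nlinarith [hg 0]
    | succ t ih =>
      refine (hblock t).trans ?_
      rcases Nat.eq_zero_or_pos t with h0 | h0
      · subst h0
        norm_num
        nlinarith [hg 0, hg q]
      · have ht1 : (1:ℝ) ≤ (t:ℝ) := by exact_mod_cast h0
        have hsq' : (1 / ((t:ℝ) + 1)) ^ 2 ≤ 1 / 2 := by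
          rw [div_pow, one_pow, div_le_div_iff₀ (by positivity) (by norm_num)]
          nlinarith
        calc g (t * q) * (1 / ((t:ℝ) + 1)) ^ 2 ≤ (g 0 * 2 * (1 / 2) ^ t) * (1 / 2) := by
              apply mul_le_mul ih hsq' (by positivity)
              have : (0:ℝ) ≤ (1/2:ℝ) ^ t := by positivity
              nlinarith [hg 0]
        _ = g 0 * 2 * (1 / 2) ^ (t + 1) := by ring
  -- summing
  have hsum1 : ∑ j ∈ Finset.range M, g j ≤ ∑ j ∈ Finset.range (M * q), g j :=
    Finset.sum_le_sum_of_subset_of_nonneg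
      (Finset.range_subset_range.mpr (Nat.le_mul_of_pos_right M hq1)) (fun i _ _ => hg i)
  have hsum2 : ∀ T : ℕ, ∑ j ∈ Finset.range (T * q), g j
      ≤ ∑ t ∈ Finset.range T, (q : ℝ) * (g 0 * 2 * (1 / 2) ^ t) := by
    intro T
    induction T with
    | zero => simp
    | succ T ih =>
      have he : (T + 1) * q = T * q + q := by ring
      rw [he, Finset.sum_range_add, Finset.sum_range_succ]
      refine add_le_add ih ?_
      have hb : ∀ x ∈ Finset.range q, g (T * q + x) ≤ g 0 * 2 * (1 / 2) ^ T :=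
        fun x _ => (hmono (T * q) (T * q + x) (Nat.le_add_right _ _)).trans (hfac T)
      calc ∑ x ∈ Finset.range q, g (T * q + x)
          ≤ ∑ _x ∈ Finset.range q, (g 0 * 2 * (1 / 2) ^ T) := Finset.sum_le_sum hb
      _ = (q : ℝ) * (g 0 * 2 * (1 / 2) ^ T) := by
          rw [Finset.sum_const, Finset.card_range, nsmul_eq_mul]
  have hgeo : ∑ t ∈ Finset.range M, ((1:ℝ) / 2) ^ t ≤ 2 := sum_geometric_two_le M
  have hg0 : 0 ≤ g 0 := hg 0
  calc ∑ j ∈ Finset.range M, g j ≤ ∑ j ∈ Finset.range (M * q), g j := hsum1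
  _ ≤ ∑ t ∈ Finset.range M, (q : ℝ) * (g 0 * 2 * (1 / 2) ^ t) := hsum2 M
  _ = (q : ℝ) * g 0 * 2 * ∑ t ∈ Finset.range M, ((1:ℝ) / 2) ^ t := by
      rw [Finset.mul_sum]
      exact Finset.sum_congr rfl fun t _ => by ring
  _ ≤ (q : ℝ) * g 0 * 2 * 2 := by
      apply mul_le_mul_of_nonneg_left hgeo (by positivity)
  _ ≤ 4 * (Real.sqrt s + 1) * g 0 := by nlinarith [mul_le_mul_of_nonneg_right hq3 hg0]

lemma Nk_id (P Q m k : ℕ) (hk : k < m) :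
    P.choose (k + 1) * Q.choose (m - k - 1) * ((k + 1) * (Q - (m - k - 1)))
    = P.choose k * Q.choose (m - k) * ((P - k) * (m - k)) := by
  have h1 := Nat.choose_succ_right_eq P k
  have h2 : Q.choose (m - k) * (m - k) = Q.choose (m - k - 1) * (Q - (m - k - 1)) := by
    conv_lhs => rw [show m - k = (m - k - 1) + 1 from by omega]
    rw [Nat.choose_succ_right_eq]
  calc P.choose (k + 1) * Q.choose (m - k - 1) * ((k + 1) * (Q - (m - k - 1)))
      = (P.choose (k + 1) * (k + 1)) * (Q.choose (m - k - 1) * (Q - (m - k - 1))) := by ring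
    _ = (P.choose k * (P - k)) * (Q.choose (m - k) * (m - k)) := by rw [h1, ← h2]
    _ = P.choose k * Q.choose (m - k) * ((P - k) * (m - k)) := by ring

/-- For every `c ∈ (0, 1/2]` there is a constant `C > 0` such that: for
integers `n ≥ 2`, `0 < p < n`, a real `α ∈ [c, 1−c]` with `αn` and `αp` integers, and
`Φ ⊆ {1,…,n}` with `|Φ| = p`, if `F` assigns a real to every `αn`-element subset `S'` and
`w ∈ ℝⁿ` satisfies that the average over all `αn`-element subsets of
`(F(S') − Σ_{i∈S'} w_i)²` is at most `ε ≥ 0`, then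
`|avg{F(S') : |S'∩Φ| = αp} − avg{Σ_{i∈S'} w_i : |S'∩Φ| = αp}| ≤ C · ε^{1/2} · n^{1/4}`. -/
theorem stmt7 (c : ℝ) (hc0 : 0 < c) (hc : c ≤ 1 / 2) :
    ∃ C : ℝ, 0 < C ∧
      ∀ (n p m b : ℕ) (α : ℝ) (Φ : Finset (Fin n))
        (F : Finset (Fin n) → ℝ) (w : Fin n → ℝ) (ε : ℝ),
        2 ≤ n → 0 < p → p < n → c ≤ α → α ≤ 1 - c →
        (m : ℝ) = α * n → (b : ℝ) = α * p → Φ.card = p → 0 ≤ ε →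
        (∑ S' ∈ Finset.powersetCard m (Finset.univ : Finset (Fin n)),
            (F S' - ∑ i ∈ S', w i) ^ 2)
          / ((Finset.powersetCard m (Finset.univ : Finset (Fin n))).card : ℝ) ≤ ε →
        |condAvg m (fun S' => (S' ∩ Φ).card = b) F
            - condAvg m (fun S' => (S' ∩ Φ).card = b) (fun S' => ∑ i ∈ S', w i)|
          ≤ C * Real.sqrt ε * (n : ℝ) ^ ((1 : ℝ) / 4) := by
  refine ⟨4, by norm_num, ?_⟩
  intro n p m b α Φ F w ε hn hp hpn hcα hαc hm hb hΦ hε hmean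
  have hα0 : 0 < α := lt_of_lt_of_le hc0 hcα
  have hα1 : α < 1 := lt_of_le_of_lt hαc (by linarith)
  have hnR : (0:ℝ) < n := by positivity
  have hpR : (0:ℝ) < p := by exact_mod_cast hp
  have hpnR : (p:ℝ) < n := by exact_mod_cast hpn
  -- basic nat inequalities
  have hbp : b < p := by
    have : (b:ℝ) < p := by rw [hb]; nlinarith
    exact_mod_cast this
  have hb1 : 0 < b := by
    have : (0:ℝ) < b := by rw [hb]; positivity
    exact_mod_cast this
  have hbm : b < m := by
    have : (b:ℝ) < m := by rw [hb, hm]; nlinarith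
    exact_mod_cast this
  have hmn : m < n := by
    have : (m:ℝ) < n := by rw [hm]; nlinarith
    exact_mod_cast this
  have hEpos : m - b < n - p := by
    have h1 : (m:ℝ) + p < n + b := by rw [hm, hb]; nlinarith
    have : m + p < n + b := by exact_mod_cast h1
    omega
  -- corner quantities
  obtain ⟨A, hAdef⟩ : ∃ A, A = p - b := ⟨_, rfl⟩
  obtain ⟨B, hBdef⟩ : ∃ B, B = m - b := ⟨_, rfl⟩
  obtain ⟨E, hEdef⟩ : ∃ E, E = n - p - (m - b) := ⟨_, rfl⟩
  have hA1 : 1 ≤ A := by omega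
  have hB1 : 1 ≤ B := by omega
  have hE1 : 1 ≤ E := by omega
  have cA : (A:ℝ) = (1 - α) * p := by
    rw [hAdef]
    push_cast [Nat.cast_sub hbp.le]
    rw [hb]; ring
  have cB : (B:ℝ) = α * ((n:ℝ) - p) := by
    rw [hBdef]
    push_cast [Nat.cast_sub hbm.le]
    rw [hb, hm]; ring
  have cE : (E:ℝ) = (1 - α) * ((n:ℝ) - p) := by
    rw [hEdef]
    push_cast [Nat.cast_sub hEpos.le, Nat.cast_sub hpn.le, Nat.cast_sub hbm.le]
    rw [hb, hm]; ring
  have hA1R : (1:ℝ) ≤ (A:ℝ) := by exact_mod_cast hA1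
  have hB1R : (1:ℝ) ≤ (B:ℝ) := by exact_mod_cast hB1
  have hAB1 : (1:ℝ) ≤ (A:ℝ) * B := by nlinarith
  obtain ⟨s, hs2, hsnn⟩ : ∃ s : ℝ, s ^ 2 = (A:ℝ) * B ∧ 0 ≤ s :=
    ⟨Real.sqrt ((A:ℝ) * B), Real.sq_sqrt (by linarith), Real.sqrt_nonneg _⟩
  have hs1 : 1 ≤ s := by nlinarith
  have hs0 : 0 < s := lt_of_lt_of_le one_pos hs1
  have hDE : (b:ℝ) * E = s ^ 2 := by rw [hs2, cA, cB, cE, hb]; ring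
  have hDEs : 2 * s ≤ (b:ℝ) + E := by nlinarith [sq_nonneg ((b:ℝ) - E)]
  have hABs : 2 * s ≤ (A:ℝ) + B := by nlinarith [sq_nonneg ((A:ℝ) - B)]
  -- the counting function
  obtain ⟨N, hN⟩ : ∃ N : ℕ → ℝ, ∀ k, N k = ((p.choose k * (n - p).choose (m - k) : ℕ) : ℝ) :=
    ⟨_, fun _ => rfl⟩
  have hNnn : ∀ k, 0 ≤ N k := fun k => by rw [hN]; exact Nat.cast_nonneg _
  -- step inequality, right tail
  have stepR : ∀ j : ℕ, b + j + 1 ≤ m →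
      N (b + j + 1) ≤ N (b + j) * (s / (s + j)) ^ 2 := by
    intro j hj
    have hkm : b + j < m := by omega
    have hid := Nk_id p (n - p) m (b + j) hkm
    have hidR : N (b + j + 1) * (((b + j + 1) * ((n - p) - (m - (b + j) - 1)) : ℕ) : ℝ)
        = N (b + j) * (((p - (b + j)) * (m - (b + j)) : ℕ) : ℝ) := by
      rw [hN, hN, show m - (b + j + 1) = m - (b + j) - 1 from by omega]
      exact_mod_cast congrArg (Nat.cast (R := ℝ)) hid
    have hnum : (((p - (b + j)) * (m - (b + j)) : ℕ) : ℝ) ≤ s ^ 2 := by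
      rw [hs2]
      have h1 : (p - (b + j)) * (m - (b + j)) ≤ A * B := Nat.mul_le_mul (by omega) (by omega)
      exact_mod_cast h1
    have hden : (s + j) ^ 2 ≤ (((b + j + 1) * ((n - p) - (m - (b + j) - 1)) : ℕ) : ℝ) := by
      have e1 : (b + j + 1) * ((n - p) - (m - (b + j) - 1)) = (b + j + 1) * (E + j + 1) := by
        rw [show (n - p) - (m - (b + j) - 1) = E + j + 1 from by omega]
      rw [e1]
      push_cast
      have hj0 : (0:ℝ) ≤ (j:ℝ) := Nat.cast_nonneg j
      have hbE0 : (0:ℝ) ≤ (b:ℝ) + E := by positivity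
      have hex : ((b:ℝ) + j + 1) * ((E:ℝ) + j + 1)
          = s ^ 2 + ((b:ℝ) + E) * (j:ℝ) + ((b:ℝ) + E) + (j:ℝ) ^ 2 + 2 * (j:ℝ) + 1 := by
        rw [← hDE]; ring
      have h2 : 2 * s * (j:ℝ) ≤ ((b:ℝ) + E) * (j:ℝ) := mul_le_mul_of_nonneg_right hDEs hj0
      calc (s + (j:ℝ)) ^ 2 = s ^ 2 + 2 * s * (j:ℝ) + (j:ℝ) ^ 2 := by ring
        _ ≤ ((b:ℝ) + j + 1) * ((E:ℝ) + j + 1) := by rw [hex]; linarith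
    have hkey : N (b + j + 1) * (s + j) ^ 2 ≤ N (b + j) * s ^ 2 := by
      calc N (b + j + 1) * (s + j) ^ 2
          ≤ N (b + j + 1) * (((b + j + 1) * ((n - p) - (m - (b + j) - 1)) : ℕ) : ℝ) :=
            mul_le_mul_of_nonneg_left hden (hNnn _)
        _ = N (b + j) * (((p - (b + j)) * (m - (b + j)) : ℕ) : ℝ) := hidR
        _ ≤ N (b + j) * s ^ 2 := mul_le_mul_of_nonneg_left hnum (hNnn _)
    have hsj : (0:ℝ) < (s + j) ^ 2 := by positivity
    rw [div_pow, mul_div_assoc', le_div_iff₀ hsj]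
    exact hkey
  -- step inequality, left tail
  have stepL : ∀ j : ℕ, j + 1 ≤ b →
      N (b - j - 1) ≤ N (b - j) * (s / (s + j)) ^ 2 := by
    intro j hj
    have hkm : b - j - 1 < m := by omega
    have hid := Nk_id p (n - p) m (b - j - 1) hkm
    have hidR : N (b - j) * (((b - j) * ((n - p) - (m - (b - j - 1) - 1)) : ℕ) : ℝ)
        = N (b - j - 1) * (((p - (b - j - 1)) * (m - (b - j - 1)) : ℕ) : ℝ) := by
      rw [hN, hN, show b - j = (b - j - 1) + 1 from by omega,
        show m - ((b - j - 1) + 1) = m - (b - j - 1) - 1 from by omega]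
      exact_mod_cast congrArg (Nat.cast (R := ℝ)) hid
    have hnum : (((b - j) * ((n - p) - (m - (b - j - 1) - 1)) : ℕ) : ℝ) ≤ s ^ 2 := by
      rw [← hDE]
      have h1 : (b - j) * ((n - p) - (m - (b - j - 1) - 1)) ≤ b * E :=
        Nat.mul_le_mul (by omega) (by omega)
      exact_mod_cast h1
    have hden : (s + j) ^ 2 ≤ (((p - (b - j - 1)) * (m - (b - j - 1)) : ℕ) : ℝ) := by
      have e1 : (p - (b - j - 1)) * (m - (b - j - 1)) = (A + j + 1) * (B + j + 1) := by
        rw [show p - (b - j - 1) = A + j + 1 from by omega,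
          show m - (b - j - 1) = B + j + 1 from by omega]
      rw [e1]
      push_cast
      have hj0 : (0:ℝ) ≤ (j:ℝ) := Nat.cast_nonneg j
      have hAB0 : (0:ℝ) ≤ (A:ℝ) + B := by positivity
      have hex : ((A:ℝ) + j + 1) * ((B:ℝ) + j + 1)
          = s ^ 2 + ((A:ℝ) + B) * (j:ℝ) + ((A:ℝ) + B) + (j:ℝ) ^ 2 + 2 * (j:ℝ) + 1 := by
        rw [hs2]; ring
      have h2 : 2 * s * (j:ℝ) ≤ ((A:ℝ) + B) * (j:ℝ) := mul_le_mul_of_nonneg_right hABs hj0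
      calc (s + (j:ℝ)) ^ 2 = s ^ 2 + 2 * s * (j:ℝ) + (j:ℝ) ^ 2 := by ring
        _ ≤ ((A:ℝ) + j + 1) * ((B:ℝ) + j + 1) := by rw [hex]; linarith
    have hkey : N (b - j - 1) * (s + j) ^ 2 ≤ N (b - j) * s ^ 2 := by
      calc N (b - j - 1) * (s + j) ^ 2
          ≤ N (b - j - 1) * (((p - (b - j - 1)) * (m - (b - j - 1)) : ℕ) : ℝ) :=
            mul_le_mul_of_nonneg_left hden (hNnn _)
        _ = N (b - j) * (((b - j) * ((n - p) - (m - (b - j - 1) - 1)) : ℕ) : ℝ) := hidR.symm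
        _ ≤ N (b - j) * s ^ 2 := mul_le_mul_of_nonneg_left hnum (hNnn _)
    have hsj : (0:ℝ) < (s + j) ^ 2 := by positivity
    rw [div_pow, mul_div_assoc', le_div_iff₀ hsj]
    exact hkey

  -- tail functions
  obtain ⟨gR, hgR⟩ : ∃ g : ℕ → ℝ, ∀ j, g j = if b + j ≤ m then N (b + j) else 0 :=
    ⟨_, fun _ => rfl⟩
  obtain ⟨gL, hgL⟩ : ∃ g : ℕ → ℝ, ∀ j, g j = if j ≤ b then N (b - j) else 0 :=
    ⟨_, fun _ => rfl⟩
  have hgRnn : ∀ j, 0 ≤ gR j := by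
    intro j; rw [hgR]; split
    · exact hNnn _
    · exact le_refl 0
  have hgLnn : ∀ j, 0 ≤ gL j := by
    intro j; rw [hgL]; split
    · exact hNnn _
    · exact le_refl 0
  have hgRrec : ∀ j, gR (j + 1) ≤ gR j * (s / (s + j)) ^ 2 := by
    intro j
    rw [hgR, hgR]
    by_cases h : b + (j + 1) ≤ m
    · rw [if_pos h, if_pos (by omega)]
      have := stepR j (by omega)
      simpa [show b + (j + 1) = b + j + 1 from rfl] using this
    · rw [if_neg h]
      apply mul_nonneg _ (by positivity)
      split
      · exact hNnn _
      · exact le_refl 0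
  have hgLrec : ∀ j, gL (j + 1) ≤ gL j * (s / (s + j)) ^ 2 := by
    intro j
    rw [hgL, hgL]
    by_cases h : j + 1 ≤ b
    · rw [if_pos h, if_pos (by omega)]
      have := stepL j h
      simpa [show b - (j + 1) = b - j - 1 from by omega] using this
    · rw [if_neg h]
      apply mul_nonneg _ (by positivity)
      split
      · exact hNnn _
      · exact le_refl 0
  have hgR0 : gR 0 = N b := by rw [hgR, if_pos (by omega : b + 0 ≤ m)]; norm_num
  have hgL0 : gL 0 = N b := by rw [hgL, if_pos (by omega : 0 ≤ b)]; norm_num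
  have tailR := tail_sum gR s hs1 hgRnn hgRrec (m + 1 - b)
  have tailL := tail_sum gL s hs1 hgLnn hgLrec (b + 1)
  -- total count via fibers
  have hcompl : Φᶜ.card = n - p := by
    simp [Finset.card_compl, hΦ]
  have hfiber : (Finset.powersetCard m (Finset.univ : Finset (Fin n))).card
      = ∑ k ∈ Finset.range (m + 1),
        ((Finset.powersetCard m (Finset.univ : Finset (Fin n))).filter
          (fun S' => (S' ∩ Φ).card = k)).card := by
    apply Finset.card_eq_sum_card_fiberwise
    intro S' hS'
    rw [Finset.mem_coe, Finset.mem_range, Nat.lt_succ_iff]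
    have h1 : (S' ∩ Φ).card ≤ S'.card := Finset.card_le_card Finset.inter_subset_left
    rwa [Finset.mem_powersetCard_univ.mp hS'] at h1
  have hsum_cast : ((Finset.powersetCard m (Finset.univ : Finset (Fin n))).card : ℝ)
      = ∑ k ∈ Finset.range (m + 1), N k := by
    rw [hfiber]
    push_cast
    refine Finset.sum_congr rfl fun k hk => ?_
    rw [Finset.mem_range, Nat.lt_succ_iff] at hk
    rw [hN]
    have h1 := count_inter Φ m k hk
    rw [hΦ, hcompl] at h1
    exact_mod_cast congrArg (Nat.cast (R := ℝ)) h1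
  -- sum decomposition and bound
  have hsplit : ∑ k ∈ Finset.range (m + 1), N k
      = (∑ j ∈ Finset.range b, N j) + ∑ j ∈ Finset.range (m + 1 - b), N (b + j) := by
    have e : b + (m + 1 - b) = m + 1 := by omega
    rw [← Finset.sum_range_add, e]
  have hright : ∑ j ∈ Finset.range (m + 1 - b), N (b + j)
      ≤ 4 * (Real.sqrt s + 1) * N b := by
    calc ∑ j ∈ Finset.range (m + 1 - b), N (b + j)
        = ∑ j ∈ Finset.range (m + 1 - b), gR j := by
          refine Finset.sum_congr rfl fun j hj => ?_
          rw [Finset.mem_range] at hj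
          rw [hgR, if_pos (by omega)]
      _ ≤ 4 * (Real.sqrt s + 1) * gR 0 := tailR
      _ = 4 * (Real.sqrt s + 1) * N b := by rw [hgR0]
  have hleft : ∑ j ∈ Finset.range b, N j ≤ 4 * (Real.sqrt s + 1) * N b := by
    calc ∑ j ∈ Finset.range b, N j
        = ∑ j ∈ Finset.range b, N (b - 1 - j) := (Finset.sum_range_reflect (fun j => N j) b).symm
      _ = ∑ j ∈ Finset.range b, gL (j + 1) := by
          refine Finset.sum_congr rfl fun j hj => ?_
          rw [Finset.mem_range] at hj
          rw [hgL, if_pos (by omega), show b - (j + 1) = b - 1 - j from by omega]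
      _ ≤ ∑ j ∈ Finset.range (b + 1), gL j := by
          rw [Finset.sum_range_succ']
          linarith [hgLnn 0]
      _ ≤ 4 * (Real.sqrt s + 1) * gL 0 := tailL
      _ = 4 * (Real.sqrt s + 1) * N b := by rw [hgL0]
  -- √s + 1 ≤ 2√n
  have hsn : s ≤ (n:ℝ) := by
    have hAn : (A:ℝ) ≤ (n:ℝ) := by exact_mod_cast show A ≤ n by omega
    have hBn : (B:ℝ) ≤ (n:ℝ) := by exact_mod_cast show B ≤ n by omega
    have hABn : (A:ℝ) * B ≤ (n:ℝ) * n :=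
      mul_le_mul hAn hBn (by positivity) (by positivity)
    nlinarith [hs2, hsnn, hABn, hnR]
  have hsqs : Real.sqrt s ≤ Real.sqrt n := Real.sqrt_le_sqrt hsn
  have h1n : (1:ℝ) ≤ Real.sqrt n := by
    have h2 := Real.sqrt_le_sqrt (show (1:ℝ) ≤ (n:ℝ) by linarith)
    rwa [Real.sqrt_one] at h2
  have hNb1 : (1:ℝ) ≤ N b := by
    rw [hN]
    have h1 : 0 < p.choose b * (n - p).choose (m - b) :=
      Nat.mul_pos (Nat.choose_pos hbp.le) (Nat.choose_pos (by omega))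
    exact_mod_cast h1
  have hTle : ((Finset.powersetCard m (Finset.univ : Finset (Fin n))).card : ℝ)
      ≤ 16 * Real.sqrt n * N b := by
    rw [hsum_cast, hsplit]
    have h8 : 8 * (Real.sqrt s + 1) ≤ 16 * Real.sqrt n := by
      nlinarith [Real.sqrt_nonneg s]
    nlinarith [hleft, hright, hNb1]
  -- cardinality of the conditioned family
  have hacard : (((Finset.powersetCard m (Finset.univ : Finset (Fin n))).filter
      (fun S' => (S' ∩ Φ).card = b)).card : ℝ) = N b := by
    rw [hN]
    have h1 := count_inter Φ m b hbm.le
    rw [hΦ, hcompl] at h1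
    exact_mod_cast congrArg (Nat.cast (R := ℝ)) h1
  have ha0 : (0:ℝ) < (((Finset.powersetCard m (Finset.univ : Finset (Fin n))).filter
      (fun S' => (S' ∩ Φ).card = b)).card : ℝ) := by rw [hacard]; linarith
  have hTpos : (0:ℝ) < ((Finset.powersetCard m (Finset.univ : Finset (Fin n))).card : ℝ) := by
    rw [hsum_cast, hsplit]
    have := Finset.sum_nonneg (fun j (_ : j ∈ Finset.range b) => hNnn j)
    have h2 : N b ≤ ∑ j ∈ Finset.range (m + 1 - b), N (b + j) := by
      have hmem : (0:ℕ) ∈ Finset.range (m + 1 - b) := by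
        rw [Finset.mem_range]; omega
      have := Finset.single_le_sum (f := fun j => N (b + j))
        (fun j _ => hNnn _) hmem
      simpa using this
    linarith
  -- the mean-square hypothesis
  have hsqsum : ∑ S' ∈ Finset.powersetCard m (Finset.univ : Finset (Fin n)),
      (F S' - ∑ i ∈ S', w i) ^ 2
      ≤ ε * ((Finset.powersetCard m (Finset.univ : Finset (Fin n))).card : ℝ) := by
    rw [div_le_iff₀ hTpos] at hmean
    linarith
  -- final assembly
  rw [condAvg, condAvg, div_sub_div_same, ← Finset.sum_sub_distrib, abs_div, abs_of_pos ha0,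
    div_le_iff₀ ha0]
  have hCS : (∑ S' ∈ (Finset.powersetCard m (Finset.univ : Finset (Fin n))).filter
        (fun S' => (S' ∩ Φ).card = b), (F S' - ∑ i ∈ S', w i)) ^ 2
      ≤ (((Finset.powersetCard m (Finset.univ : Finset (Fin n))).filter
        (fun S' => (S' ∩ Φ).card = b)).card : ℝ)
        * ∑ S' ∈ (Finset.powersetCard m (Finset.univ : Finset (Fin n))).filter
          (fun S' => (S' ∩ Φ).card = b), (F S' - ∑ i ∈ S', w i) ^ 2 := by
    have h1 := Finset.sum_mul_sq_le_sq_mul_sq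
      ((Finset.powersetCard m (Finset.univ : Finset (Fin n))).filter
        (fun S' => (S' ∩ Φ).card = b))
      (fun _ => (1:ℝ)) (fun S' => F S' - ∑ i ∈ S', w i)
    simpa [Finset.sum_const, nsmul_eq_mul] using h1
  have hsub : ∑ S' ∈ (Finset.powersetCard m (Finset.univ : Finset (Fin n))).filter
        (fun S' => (S' ∩ Φ).card = b), (F S' - ∑ i ∈ S', w i) ^ 2
      ≤ ∑ S' ∈ Finset.powersetCard m (Finset.univ : Finset (Fin n)),
        (F S' - ∑ i ∈ S', w i) ^ 2 :=
    Finset.sum_le_sum_of_subset_of_nonneg (Finset.filter_subset _ _)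
      (fun _ _ _ => sq_nonneg _)
  set a : ℝ := (((Finset.powersetCard m (Finset.univ : Finset (Fin n))).filter
      (fun S' => (S' ∩ Φ).card = b)).card : ℝ) with hadef
  have hsqbound : (∑ S' ∈ (Finset.powersetCard m (Finset.univ : Finset (Fin n))).filter
        (fun S' => (S' ∩ Φ).card = b), (F S' - ∑ i ∈ S', w i)) ^ 2
      ≤ 16 * ε * Real.sqrt n * a ^ 2 := by
    have h2 : ε * ((Finset.powersetCard m (Finset.univ : Finset (Fin n))).card : ℝ)
        ≤ ε * (16 * Real.sqrt n * a) := by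
      apply mul_le_mul_of_nonneg_left _ hε
      have h3 := hTle
      rw [← hacard] at h3
      exact h3
    calc (∑ S' ∈ (Finset.powersetCard m (Finset.univ : Finset (Fin n))).filter
          (fun S' => (S' ∩ Φ).card = b), (F S' - ∑ i ∈ S', w i)) ^ 2
        ≤ a * ∑ S' ∈ (Finset.powersetCard m (Finset.univ : Finset (Fin n))).filter
          (fun S' => (S' ∩ Φ).card = b), (F S' - ∑ i ∈ S', w i) ^ 2 := hCS
      _ ≤ a * (ε * (16 * Real.sqrt n * a)) := by
          apply mul_le_mul_of_nonneg_left _ ha0.le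
          exact (hsub.trans hsqsum).trans h2
      _ = 16 * ε * Real.sqrt n * a ^ 2 := by ring
  have hq2 : (((n:ℝ)) ^ ((1:ℝ)/4)) ^ 2 = Real.sqrt (n:ℝ) := by
    rw [Real.sqrt_eq_rpow, ← Real.rpow_natCast ((n:ℝ) ^ ((1:ℝ)/4)) 2, ← Real.rpow_mul hnR.le]
    norm_num
  have hε2 : Real.sqrt ε ^ 2 = ε := Real.sq_sqrt hε
  have hfin : (16:ℝ) * ε * Real.sqrt n * a ^ 2
      = (4 * Real.sqrt ε * ((n:ℝ) ^ ((1:ℝ)/4)) * a) ^ 2 := by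
    rw [show (4 * Real.sqrt ε * ((n:ℝ) ^ ((1:ℝ)/4)) * a) ^ 2
      = 16 * Real.sqrt ε ^ 2 * (((n:ℝ) ^ ((1:ℝ)/4)) ^ 2) * a ^ 2 from by ring, hε2, hq2]
  calc |∑ S' ∈ (Finset.powersetCard m (Finset.univ : Finset (Fin n))).filter
        (fun S' => (S' ∩ Φ).card = b), (F S' - ∑ i ∈ S', w i)|
      = Real.sqrt ((∑ S' ∈ (Finset.powersetCard m (Finset.univ : Finset (Fin n))).filter
        (fun S' => (S' ∩ Φ).card = b), (F S' - ∑ i ∈ S', w i)) ^ 2) :=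
        (Real.sqrt_sq_eq_abs _).symm
    _ ≤ Real.sqrt ((4 * Real.sqrt ε * ((n:ℝ) ^ ((1:ℝ)/4)) * a) ^ 2) := by
        apply Real.sqrt_le_sqrt
        rw [← hfin]
        exact hsqbound
    _ = 4 * Real.sqrt ε * ((n:ℝ) ^ ((1:ℝ)/4)) * a := by
        apply Real.sqrt_sq
        have h0 : (0:ℝ) ≤ (n:ℝ) ^ ((1:ℝ)/4) := Real.rpow_nonneg hnR.le _
        positivity
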